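/- Let (u, φ, ψ, w) be a classical solution of the suspension-bridge Shear beam system in thermoelasticity of type III, let c_p > 0 be a Poincaré constant for (0,L), and define I₁(t) = ∫₀^L ( ρ u_t u + (μ/2) u² ) dx + ∫₀^L ( ρ₁ φ_t φ + (γ/2) φ² ) dx. Then for every t > 0, dI₁(t)/dt ≤ −α ∫₀^L u_x² dx − λ ∫₀^L (φ−u)² dx − (K/2) ∫₀^L (φ_x+ψ)² dx − (b/2) ∫₀^L ψ_x² dx + ρ ∫₀^L u_t² dx + ρ₁ ∫₀^L φ_t² dx + C₁ ∫₀^L w_{xt}² dx, where C₁ = β²c_p/(2K) + β²c_p²/(2b). -/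

import Mathlib

open MeasureTheory Set

noncomputable section

/-- Partial derivative with respect to the time variable (second argument). -/
def pdt (f : ℝ → ℝ → ℝ) (x t : ℝ) : ℝ := deriv (fun s => f x s) t

/-- Partial derivative with respect to the space variable (first argument). -/
def pdx (f : ℝ → ℝ → ℝ) (x t : ℝ) : ℝ := deriv (fun y => f y t) x

lemma hasDerivAt_slice_t {f : ℝ → ℝ → ℝ}
    (hf : ContDiff ℝ 1 (fun p : ℝ × ℝ => f p.1 p.2)) (x t : ℝ) :
    HasDerivAt (fun s => f x s) (pdt f x t) t := by
  have hd : DifferentiableAt ℝ (fun s => f x s) t := by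
    have : DifferentiableAt ℝ (fun p : ℝ × ℝ => f p.1 p.2) (x, t) :=
      (hf.differentiable one_ne_zero).differentiableAt
    exact this.comp t ((differentiableAt_const x).prodMk differentiableAt_id)
  exact hd.hasDerivAt

lemma hasDerivAt_slice_x {f : ℝ → ℝ → ℝ}
    (hf : ContDiff ℝ 1 (fun p : ℝ × ℝ => f p.1 p.2)) (x t : ℝ) :
    HasDerivAt (fun y => f y t) (pdx f x t) x := by
  have hd : DifferentiableAt ℝ (fun y => f y t) x := by
    have : DifferentiableAt ℝ (fun p : ℝ × ℝ => f p.1 p.2) (x, t) :=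
      (hf.differentiable one_ne_zero).differentiableAt
    exact this.comp x ((hasDerivAt_id x).prodMk (hasDerivAt_const x t)).differentiableAt
  exact hd.hasDerivAt

lemma contDiff_pdt {n : ℕ∞} {f : ℝ → ℝ → ℝ}
    (hf : ContDiff ℝ (n + 1) (fun p : ℝ × ℝ => f p.1 p.2)) :
    ContDiff ℝ n (fun p : ℝ × ℝ => pdt f p.1 p.2) := by
  have key : ∀ p : ℝ × ℝ, pdt f p.1 p.2
      = fderiv ℝ (fun q : ℝ × ℝ => f q.1 q.2) p ((0 : ℝ), (1 : ℝ)) := by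
    rintro ⟨x, t⟩
    have hF : HasFDerivAt (fun q : ℝ × ℝ => f q.1 q.2)
        (fderiv ℝ (fun q : ℝ × ℝ => f q.1 q.2) (x, t)) (x, t) :=
      ((hf.differentiable (by simp [le_add_iff_nonneg_left])).differentiableAt).hasFDerivAt
    have hc : HasDerivAt (fun s : ℝ => ((x : ℝ), s)) ((0 : ℝ), (1 : ℝ)) t :=
      ((hasDerivAt_const t x).prodMk (hasDerivAt_id t))
    have := hF.comp_hasDerivAt t hc
    exact this.deriv
  have h1 : ContDiff ℝ n (fun p : ℝ × ℝ => fderiv ℝ (fun q : ℝ × ℝ => f q.1 q.2) p) :=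
    hf.fderiv_right le_rfl
  have h2 : ContDiff ℝ n (fun p : ℝ × ℝ =>
      fderiv ℝ (fun q : ℝ × ℝ => f q.1 q.2) p ((0 : ℝ), (1 : ℝ))) :=
    h1.clm_apply contDiff_const
  have : (fun p : ℝ × ℝ => pdt f p.1 p.2) = (fun p : ℝ × ℝ =>
      fderiv ℝ (fun q : ℝ × ℝ => f q.1 q.2) p ((0 : ℝ), (1 : ℝ))) := funext key
  rw [this]; exact h2

lemma contDiff_pdx {n : ℕ∞} {f : ℝ → ℝ → ℝ}
    (hf : ContDiff ℝ (n + 1) (fun p : ℝ × ℝ => f p.1 p.2)) :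
    ContDiff ℝ n (fun p : ℝ × ℝ => pdx f p.1 p.2) := by
  have key : ∀ p : ℝ × ℝ, pdx f p.1 p.2
      = fderiv ℝ (fun q : ℝ × ℝ => f q.1 q.2) p ((1 : ℝ), (0 : ℝ)) := by
    rintro ⟨x, t⟩
    have hF : HasFDerivAt (fun q : ℝ × ℝ => f q.1 q.2)
        (fderiv ℝ (fun q : ℝ × ℝ => f q.1 q.2) (x, t)) (x, t) :=
      ((hf.differentiable (by simp [le_add_iff_nonneg_left])).differentiableAt).hasFDerivAt
    have hc : HasDerivAt (fun y : ℝ => ((y : ℝ), t)) ((1 : ℝ), (0 : ℝ)) x :=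
      ((hasDerivAt_id x).prodMk (hasDerivAt_const x t))
    have := hF.comp_hasDerivAt x hc
    exact this.deriv
  have h1 : ContDiff ℝ n (fun p : ℝ × ℝ => fderiv ℝ (fun q : ℝ × ℝ => f q.1 q.2) p) :=
    hf.fderiv_right le_rfl
  have h2 : ContDiff ℝ n (fun p : ℝ × ℝ =>
      fderiv ℝ (fun q : ℝ × ℝ => f q.1 q.2) p ((1 : ℝ), (0 : ℝ))) :=
    h1.clm_apply contDiff_const
  have : (fun p : ℝ × ℝ => pdx f p.1 p.2) = (fun p : ℝ × ℝ =>
      fderiv ℝ (fun q : ℝ × ℝ => f q.1 q.2) p ((1 : ℝ), (0 : ℝ))) := funext key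
  rw [this]; exact h2

lemma cont_slice_x {f : ℝ → ℝ → ℝ}
    (hf : Continuous (fun p : ℝ × ℝ => f p.1 p.2)) (t : ℝ) :
    Continuous (fun x => f x t) :=
  hf.comp (continuous_id.prodMk continuous_const)

lemma contDiff_slice_x {n : ℕ∞} {f : ℝ → ℝ → ℝ}
    (hf : ContDiff ℝ n (fun p : ℝ × ℝ => f p.1 p.2)) (t : ℝ) :
    ContDiff ℝ n (fun x => f x t) :=
  hf.comp (contDiff_id.prodMk contDiff_const)

lemma hasDerivAt_param_integral {G G' : ℝ → ℝ → ℝ} {L : ℝ}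
    (hG : Continuous (fun p : ℝ × ℝ => G p.1 p.2))
    (hG' : Continuous (fun p : ℝ × ℝ => G' p.1 p.2))
    (hd : ∀ x s, HasDerivAt (fun s => G x s) (G' x s) s) (t : ℝ) :
    HasDerivAt (fun s => ∫ x in (0:ℝ)..L, G x s) (∫ x in (0:ℝ)..L, G' x t) t := by
  have hKc : IsCompact ((Icc (min 0 L) (max 0 L)) ×ˢ (Icc (t - 1) (t + 1))) :=
    isCompact_Icc.prod isCompact_Icc
  obtain ⟨M, hM⟩ := hKc.exists_bound_of_continuousOn hG'.continuousOn
  have main := (intervalIntegral.hasDerivAt_integral_of_dominated_loc_of_deriv_le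
    (F := fun s x => G x s) (F' := fun s x => G' x s) (x₀ := t)
    (a := 0) (b := L) (μ := volume) (bound := fun _ => M)
    (s := Metric.ball t 1) (Metric.ball_mem_nhds t one_pos)
    (Filter.Eventually.of_forall fun s =>
      ((cont_slice_x hG s).aestronglyMeasurable))
    ((cont_slice_x hG t).intervalIntegrable 0 L)
    ((cont_slice_x hG' t).aestronglyMeasurable)
    ?_ (intervalIntegrable_const) ?_).2
  · exact main
  · refine Filter.Eventually.of_forall fun x hx s hs => ?_
    have hx' : x ∈ Icc (min 0 L) (max 0 L) := Ioc_subset_Icc_self hx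
    have hs' : s ∈ Icc (t - 1) (t + 1) := by
      rw [Metric.mem_ball, Real.dist_eq] at hs
      constructor <;> [linarith [abs_lt.mp hs]; linarith [abs_lt.mp hs]]
    exact hM (x, s) ⟨hx', hs'⟩
  · exact Filter.Eventually.of_forall fun x _ s _ => hd x s

lemma young_combo {K b c_p β S Pv Qv Rv Cv Dv Wv : ℝ}
    (hK : 0 < K) (hb : 0 < b) (hcp : 0 < c_p)
    (hy1 : ∀ ε : ℝ, 0 < ε → (-β) * S ≤ ε * Pv + β^2/(4*ε) * Wv)
    (hR : ∀ s : ℝ, 0 < s → Rv ≤ (1+s)*Cv + (1+1/s)*Qv)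
    (hpφ : Pv ≤ c_p * Rv) (hpψ : Qv ≤ c_p * Dv) :
    (-β) * S ≤ K/2*Cv + b/2*Dv + (β^2*c_p/(2*K) + β^2*c_p^2/(2*b)) * Wv := by
  have hden : 0 < b + K * c_p := by positivity
  set ε : ℝ := K*b/(2*c_p*(b + K*c_p)) with hεdef
  set s : ℝ := K*c_p/b with hsdef
  have hε : 0 < ε := by rw [hεdef]; positivity
  have hs : 0 < s := by rw [hsdef]; positivity
  have h1 := hy1 ε hε
  have h2 := hR s hs
  have m1 : ε * Pv ≤ ε * (c_p * Rv) := mul_le_mul_of_nonneg_left hpφ hε.le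
  have m2 : (ε * c_p) * Rv ≤ (ε * c_p) * ((1+s)*Cv + (1+1/s)*Qv) := by
    apply mul_le_mul_of_nonneg_left h2
    positivity
  have m3 : (ε * c_p * (1+1/s)) * Qv ≤ (ε * c_p * (1+1/s)) * (c_p * Dv) := by
    apply mul_le_mul_of_nonneg_left hpψ
    have : 0 < 1 + 1/s := by positivity
    positivity
  have idC : ε * c_p * (1+s) = K/2 := by
    rw [hεdef, hsdef]; field_simp
  have idD : (ε * c_p * (1+1/s)) * c_p = b/2 := by
    rw [hεdef, hsdef]; field_simp; ring
  have idW : β^2/(4*ε) = β^2*c_p/(2*K) + β^2*c_p^2/(2*b) := by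
    rw [hεdef]; field_simp; ring
  have m2' : (ε * c_p) * ((1+s)*Cv + (1+1/s)*Qv)
      = K/2*Cv + (ε * c_p * (1+1/s)) * Qv := by rw [← idC]; ring
  have m3' : (ε * c_p * (1+1/s)) * (c_p * Dv) = b/2*Dv := by rw [← idD]; ring
  have h1' : (-β) * S ≤ ε * Pv + (β^2*c_p/(2*K) + β^2*c_p^2/(2*b)) * Wv := by
    rw [← idW]; exact h1
  rw [m2'] at m2
  rw [m3'] at m3
  linarith

/-- A classical solution of the suspension-bridge Shear beam system in
thermoelasticity of type III. -/
structure IsShearSolution (L ρ α lm μ ρ₁ K γ b ρ₃ δ κ β : ℝ)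
    (u φ ψ w : ℝ → ℝ → ℝ) : Prop where
  smooth_u : ContDiff ℝ 3 (fun p : ℝ × ℝ => u p.1 p.2)
  smooth_phi : ContDiff ℝ 3 (fun p : ℝ × ℝ => φ p.1 p.2)
  smooth_psi : ContDiff ℝ 3 (fun p : ℝ × ℝ => ψ p.1 p.2)
  smooth_w : ContDiff ℝ 3 (fun p : ℝ × ℝ => w p.1 p.2)
  eq1 : ∀ x ∈ Ioo (0:ℝ) L, ∀ t : ℝ, 0 < t →
    ρ * pdt (pdt u) x t - α * pdx (pdx u) x t - lm * (φ x t - u x t)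
      + μ * pdt u x t = 0
  eq2 : ∀ x ∈ Ioo (0:ℝ) L, ∀ t : ℝ, 0 < t →
    ρ₁ * pdt (pdt φ) x t - K * pdx (fun y s => pdx φ y s + ψ y s) x t
      + lm * (φ x t - u x t) + γ * pdt φ x t + β * pdx (pdt w) x t = 0
  eq3 : ∀ x ∈ Ioo (0:ℝ) L, ∀ t : ℝ, 0 < t →
    -b * pdx (pdx ψ) x t + K * (pdx φ x t + ψ x t) = 0
  eq4 : ∀ x ∈ Ioo (0:ℝ) L, ∀ t : ℝ, 0 < t →
    ρ₃ * pdt (pdt w) x t - δ * pdx (pdx w) x t + β * pdx (pdt φ) x t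
      - κ * pdx (pdx (pdt w)) x t = 0
  bc : ∀ t : ℝ, 0 ≤ t →
    u 0 t = 0 ∧ u L t = 0 ∧ φ 0 t = 0 ∧ φ L t = 0 ∧
    ψ 0 t = 0 ∧ ψ L t = 0 ∧ w 0 t = 0 ∧ w L t = 0

/-- The energy functional of the system. -/
def energy (L ρ α lm ρ₁ K b ρ₃ δ : ℝ) (u φ ψ w : ℝ → ℝ → ℝ) (t : ℝ) : ℝ :=
  (1/2) * ∫ x in (0:ℝ)..L,
    (ρ * (pdt u x t)^2 + α * (pdx u x t)^2 + lm * (φ x t - u x t)^2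
      + ρ₁ * (pdt φ x t)^2 + K * (pdx φ x t + ψ x t)^2 + b * (pdx ψ x t)^2
      + ρ₃ * (pdt w x t)^2 + δ * (pdx w x t)^2)

/-- The auxiliary functional I₁. -/
def I1 (L ρ μ ρ₁ γ : ℝ) (u φ : ℝ → ℝ → ℝ) (t : ℝ) : ℝ :=
  (∫ x in (0:ℝ)..L, (ρ * pdt u x t * u x t + μ / 2 * (u x t)^2))
    + ∫ x in (0:ℝ)..L, (ρ₁ * pdt φ x t * φ x t + γ / 2 * (φ x t)^2)

/-- The auxiliary functional I₂. -/
def I2 (L ρ₃ κ β : ℝ) (φ w : ℝ → ℝ → ℝ) (t : ℝ) : ℝ :=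
  ρ₃ * (∫ x in (0:ℝ)..L, pdt w x t * w x t)
    + κ / 2 * (∫ x in (0:ℝ)..L, (pdx w x t)^2)
    + β * ∫ x in (0:ℝ)..L, pdx φ x t * w x t

/-- derivative estimate for the functional I₁. -/
theorem I1_derivative_estimate
    {L ρ α lm μ ρ₁ K γ b ρ₃ δ κ β c_p : ℝ}
    (hL : 0 < L) (hρ : 0 < ρ) (hα : 0 < α) (hlm : 0 < lm) (hμ : 0 < μ)
    (hρ₁ : 0 < ρ₁) (hK : 0 < K) (hγ : 0 < γ) (hb : 0 < b) (hρ₃ : 0 < ρ₃)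
    (hδ : 0 < δ) (hκ : 0 < κ) (hβ : β ≠ 0) (hcp : 0 < c_p)
    (hpoin : ∀ f : ℝ → ℝ, ContDiff ℝ 1 f → f 0 = 0 → f L = 0 →
      (∫ x in (0:ℝ)..L, (f x)^2) ≤ c_p * ∫ x in (0:ℝ)..L, (deriv f x)^2)
    {u φ ψ w : ℝ → ℝ → ℝ}
    (hsol : IsShearSolution L ρ α lm μ ρ₁ K γ b ρ₃ δ κ β u φ ψ w) :
    ∀ t : ℝ, 0 < t →
      ∃ d : ℝ, HasDerivAt (I1 L ρ μ ρ₁ γ u φ) d t ∧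
        d ≤ -(α * ∫ x in (0:ℝ)..L, (pdx u x t)^2)
          - lm * (∫ x in (0:ℝ)..L, (φ x t - u x t)^2)
          - K / 2 * (∫ x in (0:ℝ)..L, (pdx φ x t + ψ x t)^2)
          - b / 2 * (∫ x in (0:ℝ)..L, (pdx ψ x t)^2)
          + ρ * (∫ x in (0:ℝ)..L, (pdt u x t)^2)
          + ρ₁ * (∫ x in (0:ℝ)..L, (pdt φ x t)^2)
          + (β^2 * c_p / (2 * K) + β^2 * c_p^2 / (2 * b))
              * (∫ x in (0:ℝ)..L, (pdx (pdt w) x t)^2) := by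
  intro t ht
  obtain ⟨hu3, hφ3, hψ3, hw3, heq1, heq2, heq3, heq4, hbc⟩ := hsol
  obtain ⟨hu0, huL, hφ0, hφL, hψ0, hψL, hw0, hwL⟩ := hbc t ht.le
  -- smoothness of derivatives (uncurried)
  have hu1 : ContDiff ℝ 1 (fun p : ℝ × ℝ => u p.1 p.2) := hu3.of_le (by norm_num)
  have hφ1 : ContDiff ℝ 1 (fun p : ℝ × ℝ => φ p.1 p.2) := hφ3.of_le (by norm_num)
  have hψ1 : ContDiff ℝ 1 (fun p : ℝ × ℝ => ψ p.1 p.2) := hψ3.of_le (by norm_num)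
  have hut2 : ContDiff ℝ 2 (fun p : ℝ × ℝ => pdt u p.1 p.2) :=
    contDiff_pdt (n := 2) (hu3.of_le (by norm_num))
  have hut1 : ContDiff ℝ 1 (fun p : ℝ × ℝ => pdt u p.1 p.2) := hut2.of_le (by norm_num)
  have hutt1 : ContDiff ℝ 1 (fun p : ℝ × ℝ => pdt (pdt u) p.1 p.2) :=
    contDiff_pdt (n := 1) (hut2.of_le (by norm_num))
  have hφt2 : ContDiff ℝ 2 (fun p : ℝ × ℝ => pdt φ p.1 p.2) :=
    contDiff_pdt (n := 2) (hφ3.of_le (by norm_num))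
  have hφt1 : ContDiff ℝ 1 (fun p : ℝ × ℝ => pdt φ p.1 p.2) := hφt2.of_le (by norm_num)
  have hφtt1 : ContDiff ℝ 1 (fun p : ℝ × ℝ => pdt (pdt φ) p.1 p.2) :=
    contDiff_pdt (n := 1) (hφt2.of_le (by norm_num))
  have hux2 : ContDiff ℝ 2 (fun p : ℝ × ℝ => pdx u p.1 p.2) :=
    contDiff_pdx (n := 2) (hu3.of_le (by norm_num))
  have hux1 : ContDiff ℝ 1 (fun p : ℝ × ℝ => pdx u p.1 p.2) := hux2.of_le (by norm_num)
  have huxx1 : ContDiff ℝ 1 (fun p : ℝ × ℝ => pdx (pdx u) p.1 p.2) :=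
    contDiff_pdx (n := 1) (hux2.of_le (by norm_num))
  have hφx2 : ContDiff ℝ 2 (fun p : ℝ × ℝ => pdx φ p.1 p.2) :=
    contDiff_pdx (n := 2) (hφ3.of_le (by norm_num))
  have hΦ2 : ContDiff ℝ 2 (fun p : ℝ × ℝ => pdx φ p.1 p.2 + ψ p.1 p.2) :=
    hφx2.add (hψ3.of_le (by norm_num))
  have hΦ1 : ContDiff ℝ 1
      (fun p : ℝ × ℝ => (fun y s => pdx φ y s + ψ y s) p.1 p.2) :=
    hΦ2.of_le (by norm_num)
  have hΦx1 : ContDiff ℝ 1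
      (fun p : ℝ × ℝ => pdx (fun y s => pdx φ y s + ψ y s) p.1 p.2) :=
    contDiff_pdx (n := 1) (hΦ2.of_le (by norm_num))
  have hψx2 : ContDiff ℝ 2 (fun p : ℝ × ℝ => pdx ψ p.1 p.2) :=
    contDiff_pdx (n := 2) (hψ3.of_le (by norm_num))
  have hψx1 : ContDiff ℝ 1 (fun p : ℝ × ℝ => pdx ψ p.1 p.2) := hψx2.of_le (by norm_num)
  have hψxx1 : ContDiff ℝ 1 (fun p : ℝ × ℝ => pdx (pdx ψ) p.1 p.2) :=
    contDiff_pdx (n := 1) (hψx2.of_le (by norm_num))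
  have hwt2 : ContDiff ℝ 2 (fun p : ℝ × ℝ => pdt w p.1 p.2) :=
    contDiff_pdt (n := 2) (hw3.of_le (by norm_num))
  have hwxt1 : ContDiff ℝ 1 (fun p : ℝ × ℝ => pdx (pdt w) p.1 p.2) :=
    contDiff_pdx (n := 1) (hwt2.of_le (by norm_num))
  -- continuity of uncurried functions
  have cu := hu1.continuous
  have cut := hut2.continuous
  have cutt := hutt1.continuous
  have cφ := hφ1.continuous
  have cφt := hφt2.continuous
  have cφtt := hφtt1.continuous
  have cux := hux2.continuous
  have cuxx := huxx1.continuous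
  have cφx := hφx2.continuous
  have cΦx := hΦx1.continuous
  have cψ := hψ1.continuous
  have cψx := hψx2.continuous
  have cψxx := hψxx1.continuous
  have cwxt := hwxt1.continuous
  -- continuity of time-t slices
  have su : Continuous fun x => u x t := cont_slice_x cu t
  have sut : Continuous fun x => pdt u x t := cont_slice_x cut t
  have sφ : Continuous fun x => φ x t := cont_slice_x cφ t
  have sφt : Continuous fun x => pdt φ x t := cont_slice_x cφt t
  have sux : Continuous fun x => pdx u x t := cont_slice_x cux t
  have suxx : Continuous fun x => pdx (pdx u) x t := cont_slice_x cuxx t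
  have sφx : Continuous fun x => pdx φ x t := cont_slice_x cφx t
  have sΦx : Continuous fun x => pdx (fun y s => pdx φ y s + ψ y s) x t :=
    cont_slice_x cΦx t
  have sψ : Continuous fun x => ψ x t := cont_slice_x cψ t
  have sψx : Continuous fun x => pdx ψ x t := cont_slice_x cψx t
  have sψxx : Continuous fun x => pdx (pdx ψ) x t := cont_slice_x cψxx t
  have swxt : Continuous fun x => pdx (pdt w) x t := cont_slice_x cwxt t
  -- Step 1: I1 as a single integral
  have hI1 : I1 L ρ μ ρ₁ γ u φ = fun s => ∫ x in (0:ℝ)..L,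
      (ρ * pdt u x s * u x s + μ / 2 * (u x s)^2
        + (ρ₁ * pdt φ x s * φ x s + γ / 2 * (φ x s)^2)) := by
    funext s
    have h1 : IntervalIntegrable
        (fun x => ρ * pdt u x s * u x s + μ / 2 * (u x s)^2) volume 0 L :=
      (((continuous_const.mul (cont_slice_x cut s)).mul (cont_slice_x cu s)).add
        (continuous_const.mul ((cont_slice_x cu s).pow 2))).intervalIntegrable 0 L
    have h2 : IntervalIntegrable
        (fun x => ρ₁ * pdt φ x s * φ x s + γ / 2 * (φ x s)^2) volume 0 L :=
      (((continuous_const.mul (cont_slice_x cφt s)).mul (cont_slice_x cφ s)).add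
        (continuous_const.mul ((cont_slice_x cφ s).pow 2))).intervalIntegrable 0 L
    simp only [I1]
    exact (intervalIntegral.integral_add h1 h2).symm
  -- Step 2: the derivative
  have hderiv : HasDerivAt (I1 L ρ μ ρ₁ γ u φ)
      (∫ x in (0:ℝ)..L,
        (ρ * pdt (pdt u) x t * u x t + ρ * (pdt u x t)^2 + μ * (u x t * pdt u x t)
          + ρ₁ * pdt (pdt φ) x t * φ x t + ρ₁ * (pdt φ x t)^2
          + γ * (φ x t * pdt φ x t))) t := by
    rw [hI1]
    refine hasDerivAt_param_integral
      (G := fun x s => ρ * pdt u x s * u x s + μ / 2 * (u x s)^2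
        + (ρ₁ * pdt φ x s * φ x s + γ / 2 * (φ x s)^2))
      (G' := fun x s => ρ * pdt (pdt u) x s * u x s + ρ * (pdt u x s)^2
        + μ * (u x s * pdt u x s) + ρ₁ * pdt (pdt φ) x s * φ x s
        + ρ₁ * (pdt φ x s)^2 + γ * (φ x s * pdt φ x s)) ?_ ?_ ?_ t
    · exact (((continuous_const.mul cut).mul cu).add
        (continuous_const.mul (cu.pow 2))).add
        (((continuous_const.mul cφt).mul cφ).add (continuous_const.mul (cφ.pow 2)))
    · exact ((((((continuous_const.mul cutt).mul cu).add
        (continuous_const.mul (cut.pow 2))).add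
        (continuous_const.mul (cu.mul cut))).add
        ((continuous_const.mul cφtt).mul cφ)).add
        (continuous_const.mul (cφt.pow 2))).add
        (continuous_const.mul (cφ.mul cφt))
    · intro x s
      have h1 := hasDerivAt_slice_t hu1 x s
      have h2 := hasDerivAt_slice_t hut1 x s
      have h3 := hasDerivAt_slice_t hφ1 x s
      have h4 := hasDerivAt_slice_t hφt1 x s
      have H := (((h2.const_mul ρ).mul h1).add ((h1.pow 2).const_mul (μ/2))).add
        (((h4.const_mul ρ₁).mul h3).add ((h3.pow 2).const_mul (γ/2)))
      refine H.congr_deriv ?_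
      push_cast
      ring
  refine ⟨_, hderiv, ?_⟩
  -- a.e. tools
  have hne : ∀ᵐ x : ℝ, x ≠ L := by
    have hset : {x : ℝ | ¬ x ≠ L} = {L} := by ext x; simp
    rw [ae_iff, hset]; exact measure_singleton L
  have hIoo : ∀ x : ℝ, x ∈ uIoc (0:ℝ) L → x ≠ L → x ∈ Ioo (0:ℝ) L := by
    intro x hx hxne
    rw [uIoc_of_le hL.le] at hx
    exact ⟨hx.1, lt_of_le_of_ne hx.2 hxne⟩
  -- Step 3: substitute the PDEs
  have hd_eq : (∫ x in (0:ℝ)..L, (ρ * pdt (pdt u) x t * u x t + ρ * (pdt u x t)^2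
        + μ * (u x t * pdt u x t) + ρ₁ * pdt (pdt φ) x t * φ x t
        + ρ₁ * (pdt φ x t)^2 + γ * (φ x t * pdt φ x t)))
      = ∫ x in (0:ℝ)..L, (α * (u x t * pdx (pdx u) x t)
        + lm * ((φ x t - u x t) * u x t) + ρ * (pdt u x t)^2
        + K * (φ x t * pdx (fun y s => pdx φ y s + ψ y s) x t)
        + (-lm) * ((φ x t - u x t) * φ x t)
        + (-β) * (pdx (pdt w) x t * φ x t) + ρ₁ * (pdt φ x t)^2) := by
    apply intervalIntegral.integral_congr_ae
    filter_upwards [hne] with x hxne hx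
    have e1 := heq1 x (hIoo x hx hxne) t ht
    have e2 := heq2 x (hIoo x hx hxne) t ht
    linear_combination u x t * e1 + φ x t * e2
  -- Step 4: split the integral
  have i1 : IntervalIntegrable (fun x => α * (u x t * pdx (pdx u) x t)) volume 0 L :=
    (continuous_const.mul (su.mul suxx)).intervalIntegrable 0 L
  have i2 : IntervalIntegrable (fun x => lm * ((φ x t - u x t) * u x t)) volume 0 L :=
    (continuous_const.mul ((sφ.sub su).mul su)).intervalIntegrable 0 L
  have i3 : IntervalIntegrable (fun x => ρ * (pdt u x t)^2) volume 0 L :=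
    (continuous_const.mul (sut.pow 2)).intervalIntegrable 0 L
  have i4 : IntervalIntegrable
      (fun x => K * (φ x t * pdx (fun y s => pdx φ y s + ψ y s) x t)) volume 0 L :=
    (continuous_const.mul (sφ.mul sΦx)).intervalIntegrable 0 L
  have i5 : IntervalIntegrable (fun x => (-lm) * ((φ x t - u x t) * φ x t)) volume 0 L :=
    (continuous_const.mul ((sφ.sub su).mul sφ)).intervalIntegrable 0 L
  have i6 : IntervalIntegrable (fun x => (-β) * (pdx (pdt w) x t * φ x t)) volume 0 L :=
    (continuous_const.mul (swxt.mul sφ)).intervalIntegrable 0 L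
  have i7 : IntervalIntegrable (fun x => ρ₁ * (pdt φ x t)^2) volume 0 L :=
    (continuous_const.mul (sφt.pow 2)).intervalIntegrable 0 L
  have hsplit : (∫ x in (0:ℝ)..L, (α * (u x t * pdx (pdx u) x t)
        + lm * ((φ x t - u x t) * u x t) + ρ * (pdt u x t)^2
        + K * (φ x t * pdx (fun y s => pdx φ y s + ψ y s) x t)
        + (-lm) * ((φ x t - u x t) * φ x t)
        + (-β) * (pdx (pdt w) x t * φ x t) + ρ₁ * (pdt φ x t)^2))
      = α * (∫ x in (0:ℝ)..L, u x t * pdx (pdx u) x t)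
        + lm * (∫ x in (0:ℝ)..L, (φ x t - u x t) * u x t)
        + ρ * (∫ x in (0:ℝ)..L, (pdt u x t)^2)
        + K * (∫ x in (0:ℝ)..L, φ x t * pdx (fun y s => pdx φ y s + ψ y s) x t)
        + (-lm) * (∫ x in (0:ℝ)..L, (φ x t - u x t) * φ x t)
        + (-β) * (∫ x in (0:ℝ)..L, pdx (pdt w) x t * φ x t)
        + ρ₁ * (∫ x in (0:ℝ)..L, (pdt φ x t)^2) := by
    rw [intervalIntegral.integral_add (((((i1.add i2).add i3).add i4).add i5).add i6) i7,
        intervalIntegral.integral_add ((((i1.add i2).add i3).add i4).add i5) i6,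
        intervalIntegral.integral_add (((i1.add i2).add i3).add i4) i5,
        intervalIntegral.integral_add ((i1.add i2).add i3) i4,
        intervalIntegral.integral_add (i1.add i2) i3,
        intervalIntegral.integral_add i1 i2]
    simp only [intervalIntegral.integral_const_mul]
  -- Step 5: integration by parts
  have ibp1 : (∫ x in (0:ℝ)..L, u x t * pdx (pdx u) x t)
      = -∫ x in (0:ℝ)..L, (pdx u x t)^2 := by
    have h := intervalIntegral.integral_mul_deriv_eq_deriv_mul_of_hasDerivAt
      (u := fun x => u x t) (v := fun x => pdx u x t)
      (u' := fun x => pdx u x t) (v' := fun x => pdx (pdx u) x t)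
      (a := 0) (b := L)
      su.continuousOn sux.continuousOn
      (fun x _ => hasDerivAt_slice_x hu1 x t)
      (fun x _ => hasDerivAt_slice_x hux1 x t)
      (sux.intervalIntegrable 0 L) (suxx.intervalIntegrable 0 L)
    simp only [hu0, huL, zero_mul, sub_zero, zero_sub, sub_self] at h
    rw [h]
    congr 1
    exact intervalIntegral.integral_congr fun x _ => (sq _).symm
  have ibp2 : (∫ x in (0:ℝ)..L, φ x t * pdx (fun y s => pdx φ y s + ψ y s) x t)
      = -∫ x in (0:ℝ)..L, pdx φ x t * (pdx φ x t + ψ x t) := by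
    have h := intervalIntegral.integral_mul_deriv_eq_deriv_mul_of_hasDerivAt
      (u := fun x => φ x t) (v := fun x => pdx φ x t + ψ x t)
      (u' := fun x => pdx φ x t)
      (v' := fun x => pdx (fun y s => pdx φ y s + ψ y s) x t)
      (a := 0) (b := L)
      sφ.continuousOn (sφx.add sψ).continuousOn
      (fun x _ => hasDerivAt_slice_x hφ1 x t)
      (fun x _ => hasDerivAt_slice_x (f := fun y s => pdx φ y s + ψ y s) hΦ1 x t)
      (sφx.intervalIntegrable 0 L) (sΦx.intervalIntegrable 0 L)
    simp only [hφ0, hφL, zero_mul, sub_zero, zero_sub, sub_self] at h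
    rw [h]
  have ibp3 : (∫ x in (0:ℝ)..L, ψ x t * pdx (pdx ψ) x t)
      = -∫ x in (0:ℝ)..L, (pdx ψ x t)^2 := by
    have h := intervalIntegral.integral_mul_deriv_eq_deriv_mul_of_hasDerivAt
      (u := fun x => ψ x t) (v := fun x => pdx ψ x t)
      (u' := fun x => pdx ψ x t) (v' := fun x => pdx (pdx ψ) x t)
      (a := 0) (b := L)
      sψ.continuousOn sψx.continuousOn
      (fun x _ => hasDerivAt_slice_x hψ1 x t)
      (fun x _ => hasDerivAt_slice_x hψx1 x t)
      (sψx.intervalIntegrable 0 L) (sψxx.intervalIntegrable 0 L)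
    simp only [hψ0, hψL, zero_mul, sub_zero, zero_sub, sub_self] at h
    rw [h]
    congr 1
    exact intervalIntegral.integral_congr fun x _ => (sq _).symm
  have ealg : (∫ x in (0:ℝ)..L, pdx φ x t * (pdx φ x t + ψ x t))
      = (∫ x in (0:ℝ)..L, (pdx φ x t + ψ x t)^2)
        - ∫ x in (0:ℝ)..L, ψ x t * (pdx φ x t + ψ x t) := by
    rw [← intervalIntegral.integral_sub (f := fun x => (pdx φ x t + ψ x t)^2)
      (g := fun x => ψ x t * (pdx φ x t + ψ x t))
      ((((sφx.add sψ).pow 2)).intervalIntegrable 0 L)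
      ((sψ.mul (sφx.add sψ)).intervalIntegrable 0 L)]
    exact intervalIntegral.integral_congr fun x _ => by ring
  have eeq3 : K * (∫ x in (0:ℝ)..L, ψ x t * (pdx φ x t + ψ x t))
      = b * ∫ x in (0:ℝ)..L, ψ x t * pdx (pdx ψ) x t := by
    rw [← intervalIntegral.integral_const_mul, ← intervalIntegral.integral_const_mul]
    apply intervalIntegral.integral_congr_ae
    filter_upwards [hne] with x hxne hx
    have e3 := heq3 x (hIoo x hx hxne) t ht
    linear_combination (ψ x t) * e3
  have hB : (∫ x in (0:ℝ)..L, (φ x t - u x t) * φ x t)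
      - (∫ x in (0:ℝ)..L, (φ x t - u x t) * u x t)
      = ∫ x in (0:ℝ)..L, (φ x t - u x t)^2 := by
    rw [← intervalIntegral.integral_sub (f := fun x => (φ x t - u x t) * φ x t)
      (g := fun x => (φ x t - u x t) * u x t)
      (((sφ.sub su).mul sφ).intervalIntegrable 0 L)
      (((sφ.sub su).mul su).intervalIntegrable 0 L)]
    exact intervalIntegral.integral_congr fun x _ => by ring
  -- Step 6: Young/Poincaré estimates
  have hy1 : ∀ ε : ℝ, 0 < ε →
      (-β) * (∫ x in (0:ℝ)..L, pdx (pdt w) x t * φ x t)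
      ≤ ε * (∫ x in (0:ℝ)..L, (φ x t)^2)
        + β^2/(4*ε) * ∫ x in (0:ℝ)..L, (pdx (pdt w) x t)^2 := by
    intro ε hε
    rw [← intervalIntegral.integral_const_mul, ← intervalIntegral.integral_const_mul,
        ← intervalIntegral.integral_const_mul,
        ← intervalIntegral.integral_add (f := fun x => ε * (φ x t)^2)
          (g := fun x => β^2/(4*ε) * (pdx (pdt w) x t)^2)
          ((continuous_const.mul (sφ.pow 2)).intervalIntegrable 0 L)
          ((continuous_const.mul (swxt.pow 2)).intervalIntegrable 0 L)]
    apply intervalIntegral.integral_mono_on (f := fun x => (-β) * (pdx (pdt w) x t * φ x t))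
      (g := fun x => ε * (φ x t)^2 + β^2/(4*ε) * (pdx (pdt w) x t)^2) hL.le
      ((continuous_const.mul (swxt.mul sφ)).intervalIntegrable 0 L)
      (((continuous_const.mul (sφ.pow 2)).add
        (continuous_const.mul (swxt.pow 2))).intervalIntegrable 0 L)
    intro x _
    have key : ε*(φ x t)^2 + β^2/(4*ε)*(pdx (pdt w) x t)^2
        - (-β)*(pdx (pdt w) x t * φ x t)
        = (2*ε*(φ x t) + β*(pdx (pdt w) x t))^2 / (4*ε) := by
      field_simp
      ring
    have h2 : (0:ℝ) ≤ (2*ε*(φ x t) + β*(pdx (pdt w) x t))^2 / (4*ε) := by positivity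
    rw [← sub_nonneg]
    rw [show ε*(φ x t)^2 + β^2/(4*ε)*(pdx (pdt w) x t)^2
        - (-β)*(pdx (pdt w) x t * φ x t)
        = (2*ε*(φ x t) + β*(pdx (pdt w) x t))^2 / (4*ε) from key] at *
    exact h2
  have hy2 : ∀ s : ℝ, 0 < s →
      (∫ x in (0:ℝ)..L, (pdx φ x t)^2)
      ≤ (1+s) * (∫ x in (0:ℝ)..L, (pdx φ x t + ψ x t)^2)
        + (1+1/s) * ∫ x in (0:ℝ)..L, (ψ x t)^2 := by
    intro s hs
    rw [← intervalIntegral.integral_const_mul, ← intervalIntegral.integral_const_mul,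
        ← intervalIntegral.integral_add (f := fun x => (1+s) * (pdx φ x t + ψ x t)^2)
          (g := fun x => (1+1/s) * (ψ x t)^2)
          ((continuous_const.mul ((sφx.add sψ).pow 2)).intervalIntegrable 0 L)
          ((continuous_const.mul (sψ.pow 2)).intervalIntegrable 0 L)]
    apply intervalIntegral.integral_mono_on (f := fun x => (pdx φ x t)^2)
      (g := fun x => (1+s) * (pdx φ x t + ψ x t)^2 + (1+1/s) * (ψ x t)^2) hL.le
      ((sφx.pow 2).intervalIntegrable 0 L)
      (((continuous_const.mul ((sφx.add sψ).pow 2)).add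
        (continuous_const.mul (sψ.pow 2))).intervalIntegrable 0 L)
    intro x _
    have key : (1+s)*(pdx φ x t + ψ x t)^2 + (1+1/s)*(ψ x t)^2 - (pdx φ x t)^2
        = (s*(pdx φ x t + ψ x t) + ψ x t)^2 / s := by
      field_simp
      ring
    have h2 : (0:ℝ) ≤ (s*(pdx φ x t + ψ x t) + ψ x t)^2 / s := by positivity
    rw [← sub_nonneg, show (1+s)*(pdx φ x t + ψ x t)^2 + (1+1/s)*(ψ x t)^2
        - (pdx φ x t)^2 = (s*(pdx φ x t + ψ x t) + ψ x t)^2 / s from key]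
    exact h2
  have hpφ : (∫ x in (0:ℝ)..L, (φ x t)^2)
      ≤ c_p * ∫ x in (0:ℝ)..L, (pdx φ x t)^2 :=
    hpoin (fun x => φ x t) (contDiff_slice_x hφ1 t) hφ0 hφL
  have hpψ : (∫ x in (0:ℝ)..L, (ψ x t)^2)
      ≤ c_p * ∫ x in (0:ℝ)..L, (pdx ψ x t)^2 :=
    hpoin (fun x => ψ x t) (contDiff_slice_x hψ1 t) hψ0 hψL
  have hYoung := young_combo hK hb hcp hy1 hy2 hpφ hpψ
  -- final assembly
  have hd2 : (∫ x in (0:ℝ)..L, (ρ * pdt (pdt u) x t * u x t + ρ * (pdt u x t)^2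
        + μ * (u x t * pdt u x t) + ρ₁ * pdt (pdt φ) x t * φ x t
        + ρ₁ * (pdt φ x t)^2 + γ * (φ x t * pdt φ x t)))
      = -(α * ∫ x in (0:ℝ)..L, (pdx u x t)^2)
        - lm * (∫ x in (0:ℝ)..L, (φ x t - u x t)^2)
        - K * (∫ x in (0:ℝ)..L, (pdx φ x t + ψ x t)^2)
        - b * (∫ x in (0:ℝ)..L, (pdx ψ x t)^2)
        + ρ * (∫ x in (0:ℝ)..L, (pdt u x t)^2)
        + ρ₁ * (∫ x in (0:ℝ)..L, (pdt φ x t)^2)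
        + (-β) * (∫ x in (0:ℝ)..L, pdx (pdt w) x t * φ x t) := by
    linear_combination hd_eq + hsplit + α*ibp1 + K*ibp2 - K*ealg + eeq3 + b*ibp3 - lm*hB
  rw [hd2]
  linarith [hYoung]
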